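/- Let p be an odd prime, G a group, and x, y ∈ G elements with y^{p²} = 1 and x y x⁻¹ = y^{1+ap} for some integer a. Then (xy)^p = y^p x^p. -/

import Mathlib

/-- Let `p` be an odd prime, `G` a group, and `x, y ∈ G` with `y^(p²) = 1`
and `x y x⁻¹ = y^(1 + a p)` for some integer `a`.  Then `(x y)^p = y^p x^p`. -/
theorem xy_pow_p_eq_yp_xp
    (p : ℕ) (hp : p.Prime) (hodd : Odd p) (G : Type*) [Group G]
    (x y : G) (a : ℤ)
    (hy : y ^ (p ^ 2) = 1)
    (hconj : x * y * x⁻¹ = y ^ ((1 : ℤ) + a * p)) :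
    (x * y) ^ p = y ^ p * x ^ p := by
  set c : ℤ := 1 + a * p with hc
  -- expansion of powers of c modulo p^2
  have hpow : ∀ k : ℕ, ∃ r : ℤ, c ^ k = 1 + (k : ℤ) * a * p + (p : ℤ) ^ 2 * r := by
    intro k
    induction k with
    | zero => exact ⟨0, by simp⟩
    | succ n ih =>
      obtain ⟨r, hr⟩ := ih
      refine ⟨r + n * a ^ 2 + r * a * p, ?_⟩
      rw [pow_succ, hr, hc]
      push_cast
      ring
  -- basic commutation
  have hxy : ∀ m : ℤ, x * y ^ m = y ^ (c * m) * x := by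
    intro m
    have h1 : x * y ^ m * x⁻¹ = y ^ (c * m) := by
      rw [← conj_zpow, hconj, ← zpow_mul]
    rw [← h1]
    group
  -- the key formula
  have key : ∀ n : ℕ,
      (x * y) ^ n = y ^ (∑ i ∈ Finset.range n, c ^ (i + 1)) * x ^ n := by
    intro n
    induction n with
    | zero => simp
    | succ n ih =>
      have hsum : c + c * ∑ i ∈ Finset.range n, c ^ (i + 1)
          = ∑ i ∈ Finset.range (n + 1), c ^ (i + 1) := by
        rw [Finset.sum_range_succ' (fun i => c ^ (i + 1)) n, Finset.mul_sum]
        simp [pow_succ, pow_zero]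
        ring_nf
      calc (x * y) ^ (n + 1) = (x * y) * (x * y) ^ n := by rw [pow_succ']
        _ = (x * y) * (y ^ (∑ i ∈ Finset.range n, c ^ (i + 1)) * x ^ n) := by rw [ih]
        _ = x * (y ^ (1 + ∑ i ∈ Finset.range n, c ^ (i + 1))) * x ^ n := by
              simp [zpow_add, mul_assoc]
        _ = y ^ (c * (1 + ∑ i ∈ Finset.range n, c ^ (i + 1))) * x * x ^ n := by
              rw [hxy]
        _ = y ^ (∑ i ∈ Finset.range (n + 1), c ^ (i + 1)) * x ^ (n + 1) := by
              rw [mul_one_add c, hsum, pow_succ' x n, mul_assoc]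
  -- the sum is p mod p^2
  have hsum2 : ∀ n : ℕ, ∃ m : ℤ,
      2 * ∑ i ∈ Finset.range n, c ^ (i + 1)
        = 2 * n + a * p * n * (n + 1) + 2 * (p : ℤ) ^ 2 * m := by
    intro n
    induction n with
    | zero => exact ⟨0, by simp⟩
    | succ n ih =>
      obtain ⟨m, hm⟩ := ih
      obtain ⟨r, hr⟩ := hpow (n + 1)
      refine ⟨m + r, ?_⟩
      rw [Finset.sum_range_succ, mul_add, hm, hr]
      push_cast
      ring
  obtain ⟨m, hm⟩ := hsum2 p
  obtain ⟨q, hq⟩ := hodd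
  have hq' : (p : ℤ) + 1 = 2 * ((q : ℤ) + 1) := by push_cast [hq]; ring
  have hS : ∑ i ∈ Finset.range p, c ^ (i + 1)
      = (p : ℤ) + (p : ℤ) ^ 2 * (a * ((q : ℤ) + 1) + m) := by
    have h2 : (2 : ℤ) * ∑ i ∈ Finset.range p, c ^ (i + 1)
        = 2 * ((p : ℤ) + (p : ℤ) ^ 2 * (a * ((q : ℤ) + 1) + m)) := by
      rw [hm]
      linear_combination a * (p : ℤ) ^ 2 * hq'
    exact mul_left_cancel₀ two_ne_zero h2
  have h1 : y ^ ((p : ℤ) ^ 2) = 1 := by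
    rw [show ((p : ℤ) ^ 2) = ((p ^ 2 : ℕ) : ℤ) by push_cast; ring, zpow_natCast, hy]
  rw [key p, hS, zpow_add, zpow_mul, h1, one_zpow, mul_one, zpow_natCast]
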